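/- The domain D = ℤ + Xℚ[X] is not quasi atomic; in fact, for the element X ∈ D there is no b ∈ D such that X·b is a finite product of irreducible elements of D. -/

import Mathlib

open Polynomial

/-- `D = ℤ + Xℚ[X]` : the subring of `ℚ[X]` of polynomials with integer constant
coefficient. -/
noncomputable def ZplusXQX : Subring (Polynomial ℚ) where
  carrier := {f | ∃ n : ℤ, f.coeff 0 = (n : ℚ)}
  zero_mem' := ⟨0, by simp⟩
  one_mem' := ⟨1, by simp⟩
  add_mem' := by
    rintro f g ⟨m, hm⟩ ⟨n, hn⟩
    exact ⟨m + n, by simp [hm, hn]⟩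
  mul_mem' := by
    rintro f g ⟨m, hm⟩ ⟨n, hn⟩
    exact ⟨m * n, by simp [Polynomial.mul_coeff_zero, hm, hn]⟩
  neg_mem' := by
    rintro f ⟨m, hm⟩
    exact ⟨-m, by simp [hm]⟩

/-- The constant coefficient ring hom on `D`. -/
noncomputable def cc : ZplusXQX →+* ℚ :=
  (Polynomial.constantCoeff).comp ZplusXQX.subtype

lemma cc_apply (p : ZplusXQX) : cc p = (p : Polynomial ℚ).coeff 0 := rfl

lemma two_not_unit : ¬ IsUnit (2 : ZplusXQX) := by
  intro h
  obtain ⟨b, hb⟩ := isUnit_iff_exists_inv.mp h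
  have := congrArg cc hb
  rw [map_mul, map_one, cc_apply] at this
  obtain ⟨n, hn⟩ := b.2
  rw [show ((2 : ZplusXQX) : Polynomial ℚ) = 2 from rfl,
    show cc b = (n : ℚ) from hn] at this
  simp only [Polynomial.coeff_ofNat_zero] at this
  have : (2 * n : ℤ) = 1 := by exact_mod_cast (show ((2 * n : ℤ) : ℚ) = 1 by push_cast; linarith)
  omega

lemma not_irred_of_cc_zero (p : ZplusXQX) (hp : (p : Polynomial ℚ).coeff 0 = 0) :
    ¬ Irreducible p := by
  intro hi
  set q : ZplusXQX := ⟨Polynomial.C (1/2 : ℚ) * (p : Polynomial ℚ),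
    ⟨0, by simp [Polynomial.mul_coeff_zero, hp]⟩⟩ with hq
  have hpq : p = 2 * q := by
    apply Subtype.ext
    push_cast [hq]
    rw [show ((2 : ZplusXQX) : Polynomial ℚ) = Polynomial.C 2 by norm_cast]
    rw [← mul_assoc, ← Polynomial.C_mul]
    norm_num
  rcases hi.isUnit_or_isUnit hpq with h | h
  · exact two_not_unit h
  · obtain ⟨b, hb⟩ := isUnit_iff_exists_inv.mp h
    have := congrArg cc hb
    rw [map_mul, map_one, cc_apply, cc_apply] at this
    simp [hq, Polynomial.mul_coeff_zero, hp] at this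

lemma no_factorization : ¬ ∃ b : ZplusXQX, ∃ l : List ZplusXQX, l ≠ [] ∧
    (∀ p ∈ l, Irreducible p) ∧
    (⟨Polynomial.X, 0, by simp⟩ : ZplusXQX) * b = l.prod := by
  rintro ⟨b, l, -, hirr, heq⟩
  have h0 : cc ((⟨Polynomial.X, 0, by simp⟩ : ZplusXQX) * b) = 0 := by
    rw [map_mul, cc_apply]
    simp
  rw [heq, map_list_prod] at h0
  have hz : (0 : ℚ) ∈ l.map cc := List.prod_eq_zero_iff.mp h0
  obtain ⟨p, hp, hp0⟩ := List.mem_map.mp hz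
  exact not_irred_of_cc_zero p hp0 (hirr p hp)

/-- `D = ℤ + Xℚ[X]` is not quasi atomic; in fact for the element `X ∈ D` there is no
`b ∈ D` such that `X * b` is a finite product of irreducible elements of `D`. -/
theorem ZplusXQX_not_quasiAtomic :
    (¬ ∀ a : ZplusXQX, a ≠ 0 → ¬ IsUnit a → ∃ b : ZplusXQX,
        ∃ l : List ZplusXQX, l ≠ [] ∧ (∀ p ∈ l, Irreducible p) ∧ a * b = l.prod) ∧
      ¬ ∃ b : ZplusXQX, ∃ l : List ZplusXQX, l ≠ [] ∧ (∀ p ∈ l, Irreducible p) ∧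
        (⟨Polynomial.X, 0, by simp⟩ : ZplusXQX) * b = l.prod := by
  refine ⟨?_, no_factorization⟩
  intro h
  have hXne : (⟨Polynomial.X, 0, by simp⟩ : ZplusXQX) ≠ 0 := by
    intro hc
    have := congrArg (Subtype.val) hc
    simpa using this
  have hXnu : ¬ IsUnit (⟨Polynomial.X, 0, by simp⟩ : ZplusXQX) := by
    intro hc
    have : IsUnit (Polynomial.X : Polynomial ℚ) := hc.map ZplusXQX.subtype
    exact Polynomial.not_isUnit_X this
  exact no_factorization (h _ hXne hXnu)
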